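/- Let τ ∈ (0,1] and let N ≥ 2 be an integer. Define F_N(x) := Σ_{k=0}^{N-2} ((τ/2)^k/k!) H_k(x)². Then for all real x, F_N'(x) = (4τx/(1+τ)) F_N(x) - (4(τ/2)^{N-1}/(1+τ)) · H_{N-2}(x) H_{N-1}(x)/(N-2)!. -/

import Mathlib

open Real

/-- Physicists' Hermite polynomials: H₀ = 1, H₁ = 2x, H_{n+2} = 2x H_{n+1} - 2(n+1) H_n. -/
noncomputable def Hp : ℕ → ℝ → ℝ
  | 0 => fun _ => 1
  | 1 => fun x => 2*x
  | n+2 => fun x => 2*x*Hp (n+1) x - 2*(n+1)*Hp n x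

lemma Hp_rec (n : ℕ) (x : ℝ) : Hp (n+1) x = 2*x*Hp n x - 2*n*Hp (n-1) x := by
  cases n with
  | zero => simp [Hp]
  | succ m => simp [Hp]

lemma Hp_hasDerivAt : ∀ (n : ℕ) (x : ℝ), HasDerivAt (Hp n) (2*n*Hp (n-1) x) x := by
  intro n
  induction n using Nat.twoStepInduction with
  | zero => intro x; simpa [Hp] using (hasDerivAt_const x (1:ℝ))
  | one =>
    intro x
    have : HasDerivAt (fun y : ℝ => 2*y) 2 x := by
      simpa using (hasDerivAt_id x).const_mul (2:ℝ)
    simpa [Hp] using this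
  | more m ih1 ih2 =>
    intro x
    have h1 : HasDerivAt (fun y : ℝ => 2*y*Hp (m+1) y)
        (2*Hp (m+1) x + 2*x*(2*(m+1)*Hp m x)) x := by
      have := ((hasDerivAt_id x).const_mul (2:ℝ)).fun_mul (ih2 x)
      simpa [Nat.add_sub_cancel] using this
    have h2 : HasDerivAt (fun y : ℝ => 2*(m:ℝ)*Hp m y + 2*Hp m y)
        (2*(m:ℝ)*(2*m*Hp (m-1) x) + 2*(2*m*Hp (m-1) x)) x := by
      exact ((ih1 x).const_mul _).add ((ih1 x).const_mul _)
    have h : HasDerivAt (Hp (m+2))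
        (2*Hp (m+1) x + 2*x*(2*(m+1)*Hp m x)
          - (2*(m:ℝ)*(2*m*Hp (m-1) x) + 2*(2*m*Hp (m-1) x))) x := by
      have : HasDerivAt (fun y : ℝ => 2*y*Hp (m+1) y - (2*(m:ℝ)*Hp m y + 2*Hp m y)) _ x := h1.fun_sub h2
      convert this using 2 with y
      · show Hp (m+2) y = _
        rw [show Hp (m+2) y = 2*y*Hp (m+1) y - 2*(m+1)*Hp m y from rfl]
        ring
    convert h using 1
    have hr := Hp_rec m x
    rw [show ((m:ℕ)+2-1 : ℕ) = m+1 from rfl]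
    rw [hr]; push_cast; ring

lemma CD (τ : ℝ) (hτ : 0 < τ) (x : ℝ) (M : ℕ) :
    HasDerivAt (fun y : ℝ =>
        ∑ k ∈ Finset.range (M+1), ((τ/2)^k / (Nat.factorial k : ℝ)) * (Hp k y)^2)
      ((4*τ*x/(1+τ)) *
          (∑ k ∈ Finset.range (M+1), ((τ/2)^k / (Nat.factorial k : ℝ)) * (Hp k x)^2)
        - (4*(τ/2)^(M+1)/(1+τ)) * (Hp M x * Hp (M+1) x / (Nat.factorial M : ℝ))) x := by
  have hτ1 : (1:ℝ) + τ ≠ 0 := by positivity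
  induction M with
  | zero =>
    have h : HasDerivAt (fun _ : ℝ => ((τ/2)^0 / (Nat.factorial 0 : ℝ)) * (1:ℝ)^2) 0 x :=
      hasDerivAt_const x _
    have h' : HasDerivAt (fun y : ℝ =>
        ∑ k ∈ Finset.range 1, ((τ/2)^k / (Nat.factorial k : ℝ)) * (Hp k y)^2) 0 x := by
      simpa [Finset.sum_range_one, Hp] using h
    convert h' using 1
    simp [Finset.sum_range_one, Hp, Nat.factorial]
    field_simp
    ring
  | succ M ih =>
    have hH := Hp_hasDerivAt (M+1) x
    rw [Nat.add_sub_cancel] at hH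
    have hterm := (hH.fun_pow 2).const_mul ((τ/2)^(M+1) / (Nat.factorial (M+1) : ℝ))
    have h : HasDerivAt (fun y : ℝ => (∑ k ∈ Finset.range (M+1), ((τ/2)^k / (Nat.factorial k : ℝ)) * (Hp k y)^2) + ((τ/2)^(M+1) / (Nat.factorial (M+1) : ℝ)) * (Hp (M+1) y)^2) _ x := ih.fun_add hterm
    have heq : ∀ y : ℝ, (∑ k ∈ Finset.range (M+1+1), ((τ/2)^k / (Nat.factorial k : ℝ)) * (Hp k y)^2)
        = (∑ k ∈ Finset.range (M+1), ((τ/2)^k / (Nat.factorial k : ℝ)) * (Hp k y)^2)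
          + ((τ/2)^(M+1) / (Nat.factorial (M+1) : ℝ)) * (Hp (M+1) y)^2 := fun y =>
      Finset.sum_range_succ _ _
    rw [show (fun y : ℝ =>
        ∑ k ∈ Finset.range (M+1+1), ((τ/2)^k / (Nat.factorial k : ℝ)) * (Hp k y)^2)
        = (fun y : ℝ =>
        (∑ k ∈ Finset.range (M+1), ((τ/2)^k / (Nat.factorial k : ℝ)) * (Hp k y)^2)
          + ((τ/2)^(M+1) / (Nat.factorial (M+1) : ℝ)) * (Hp (M+1) y)^2) from funext heq]
    rw [heq x]
    convert h using 1
    have hrec := Hp_rec (M+1) x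
    rw [Nat.add_sub_cancel] at hrec
    rw [hrec]
    have hfac : ((Nat.factorial (M+1) : ℝ)) = (M+1) * (Nat.factorial M : ℝ) := by
      push_cast [Nat.factorial_succ]; ring
    rw [hfac]
    have hf : (Nat.factorial M : ℝ) ≠ 0 := Nat.cast_ne_zero.mpr (Nat.factorial_ne_zero M)
    have hM1 : ((M:ℝ)+1) ≠ 0 := by positivity
    field_simp
    push_cast; ring

theorem hermite_CD_identity (τ : ℝ) (hτ : τ ∈ Set.Ioc (0:ℝ) 1) (N : ℕ) (hN : 2 ≤ N) (x : ℝ) :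
    deriv (fun y : ℝ =>
        ∑ k ∈ Finset.range (N-1), ((τ/2)^k / (Nat.factorial k : ℝ)) * (Hp k y)^2) x
      = (4*τ*x/(1+τ)) *
          (∑ k ∈ Finset.range (N-1), ((τ/2)^k / (Nat.factorial k : ℝ)) * (Hp k x)^2)
        - (4*(τ/2)^(N-1)/(1+τ)) * (Hp (N-2) x * Hp (N-1) x / (Nat.factorial (N-2) : ℝ)) := by
  obtain ⟨M, rfl⟩ : ∃ M, N = M + 2 := ⟨N - 2, by omega⟩
  have h1 : M + 2 - 1 = M + 1 := rfl
  have h2 : M + 2 - 2 = M := rfl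
  rw [h1, h2]
  exact (CD τ hτ.1 x M).deriv
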